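/- Fix an integer h ≥ 1 and let T_{2,h} be the perfect binary tree of height h with any assignment of nonzero real edge weights. If h is odd, then g(T_{2,h}; n) ≲ n^((2/3)(2^(h+1) − 1)); if h is even, then g(T_{2,h}; n) ≲ n^(1 + (4/3)(2^h − 1)). -/
import Mathlib


open scoped InnerProductSpace

noncomputable section

/-- Points in the plane. -/
abbrev Pt2 : Type := EuclideanSpace ℝ (Fin 2)

/-- The vertex set of the perfect binary rooted tree `T_{2,h}` of height `h`: a vertex is
a list of child-selectors of length at most `h` (the root is the empty list, and the
leaves are the lists of length exactly `h`), so there are `2^(h+1) − 1` vertices. -/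
def TreeVert (c h : ℕ) : Type := {l : List (Fin c) // l.length ≤ h}

/-- Adjacency in the perfect `c`-ary tree `T_{c,h}`: a vertex is adjacent precisely to its
parent and to its children. -/
def treeAdj (c h : ℕ) (u v : TreeVert c h) : Prop :=
  (∃ i : Fin c, u.1 = i :: v.1) ∨ (∃ i : Fin c, v.1 = i :: u.1)

/-- The set of dot product `T_{c,h}`-configurations in a point set `E`, for an
edge-weight function `w`: injective maps `φ` from the vertices of `T_{c,h}` into `E`
such that the dot product of the images of any two adjacent vertices equals the weight of
the corresponding edge. -/
def dpTreeConfigs (c h : ℕ) (w : TreeVert c h → TreeVert c h → ℝ) (E : Finset Pt2) :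
    Set (TreeVert c h → Pt2) :=
  {φ | (∀ v, φ v ∈ E) ∧ Function.Injective φ ∧
    ∀ u v, treeAdj c h u v → ⟪φ u, φ v⟫_ℝ = w u v}



def Gexp : ℕ → ℕ
  | 0 => 1
  | 1 => 2
  | (j+2) => 4 * Gexp j + (j % 2) + 1

lemma Gexp_succ (j : ℕ) : Gexp (j+1) = 2 * Gexp j + (j % 2) := by
  induction j with
  | zero => simp [Gexp]
  | succ j ih =>
    show 4 * Gexp j + (j % 2) + 1 = _
    omega

lemma Gexp_pos (j : ℕ) : 1 ≤ Gexp j := by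
  induction j with
  | zero => simp [Gexp]
  | succ j ih => rw [Gexp_succ]; omega

lemma Gexp_a (j : ℕ) : 1 + 4 * Gexp j ≤ Gexp (j+2) := by
  show _ ≤ 4 * Gexp j + (j % 2) + 1; omega

lemma Gexp_b (j : ℕ) : 2 + 8 * Gexp j ≤ Gexp (j+3) := by
  have h1 := Gexp_succ j
  have h2 : Gexp (j+3) = 4 * Gexp (j+1) + ((j+1) % 2) + 1 := rfl
  omega

lemma Gexp_closed (j : ℕ) : 3 * Gexp j + (j % 2) + 1 = 2^(j+2) := by
  induction j with
  | zero => simp [Gexp]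
  | succ j ih =>
    rw [Gexp_succ]
    have hp : (2:ℕ)^(j+1+2) = 2^(j+2)*2 := pow_succ 2 (j+2)
    omega

lemma inner2 (x y : Pt2) : ⟪x, y⟫_ℝ = x 0 * y 0 + x 1 * y 1 := by
  simp [PiLp.inner_apply, RCLike.inner_apply, Fin.sum_univ_two, mul_comm]

lemma pt_ne_zero_iff (x : Pt2) : x ≠ 0 ↔ (x 0 ≠ 0 ∨ x 1 ≠ 0) := by
  constructor
  · intro hx
    by_contra hc
    push_neg at hc
    apply hx
    ext i
    fin_cases i <;> simp [hc.1, hc.2]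
  · rintro (h | h) hx <;> simp [hx] at h

lemma smul_apply2 (μ : ℝ) (p : Pt2) (i : Fin 2) : (μ • p) i = μ * p i := rfl

lemma cross_eq (d p r : Pt2) (hd : d ≠ 0) (h1 : ⟪p, d⟫_ℝ = 0) (h2 : ⟪r, d⟫_ℝ = 0) :
    p 0 * r 1 = p 1 * r 0 := by
  rw [inner2] at h1 h2
  rcases (pt_ne_zero_iff d).mp hd with h0 | h0
  · apply mul_right_cancel₀ h0
    linear_combination r 1 * h1 - p 1 * h2
  · apply mul_right_cancel₀ h0
    linear_combination p 0 * h2 - r 0 * h1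

lemma exists_smul_of_cross (p r : Pt2) (hp : p ≠ 0) (hc : p 0 * r 1 = p 1 * r 0) :
    ∃ μ : ℝ, r = μ • p := by
  rcases (pt_ne_zero_iff p).mp hp with h0 | h0
  · refine ⟨r 0 / p 0, ?_⟩
    ext i
    fin_cases i
    · simp [smul_apply2]; field_simp
    · simp [smul_apply2]; field_simp; linear_combination hc
  · refine ⟨r 1 / p 1, ?_⟩
    ext i
    fin_cases i
    · simp [smul_apply2]; field_simp; linear_combination -hc
    · simp [smul_apply2]; field_simp

-- uniqueness of q given two independent constraints
lemma solve_unique {p r₁ r₂ : Pt2} {w a b : ℝ} (hw : w ≠ 0) (hp : p ≠ 0)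
    (hr : ¬(r₁ = (a/w) • p ∧ r₂ = (b/w) • p))
    {q q' : Pt2} (hq1 : ⟪q, p⟫_ℝ = w) (hq2 : ⟪r₁, q⟫_ℝ = a) (hq3 : ⟪r₂, q⟫_ℝ = b)
    (hq1' : ⟪q', p⟫_ℝ = w) (hq2' : ⟪r₁, q'⟫_ℝ = a) (hq3' : ⟪r₂, q'⟫_ℝ = b) : q = q' := by
  by_contra hne
  have hd : q - q' ≠ 0 := sub_ne_zero.mpr hne
  have esub : ∀ i, (q - q') i = q i - q' i := fun _ => rfl
  have hpd : ⟪p, q - q'⟫_ℝ = 0 := by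
    rw [inner2, esub 0, esub 1]
    rw [inner2] at hq1 hq1'
    linear_combination hq1 - hq1'
  have hr1d : ⟪r₁, q - q'⟫_ℝ = 0 := by
    rw [inner2, esub 0, esub 1]; rw [inner2] at hq2 hq2'; linear_combination hq2 - hq2'
  have hr2d : ⟪r₂, q - q'⟫_ℝ = 0 := by
    rw [inner2, esub 0, esub 1]; rw [inner2] at hq3 hq3'; linear_combination hq3 - hq3'
  apply hr
  have key : ∀ r : Pt2, ∀ c : ℝ, ⟪r, q - q'⟫_ℝ = 0 → ⟪r, q⟫_ℝ = c → r = (c/w) • p := by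
    intro r c hrd hrq
    obtain ⟨μ, hμ⟩ := exists_smul_of_cross p r hp (cross_eq (q - q') p r hd hpd hrd)
    have : c = μ * w := by
      rw [hμ, real_inner_smul_left, real_inner_comm] at hrq
      rw [← hrq, hq1]
    rw [hμ, this]
    congr 1
    field_simp
  exact ⟨key r₁ a hr1d hq2, key r₂ b hr2d hq3⟩

-- uniqueness of p on two lines (for the L0 lemma)
lemma p_unique {q r : Pt2} {w : ℝ} (hw : w ≠ 0) (hqr : q ≠ r)
    {p p' : Pt2} (h1 : ⟪q, p⟫_ℝ = w) (h2 : ⟪r, p⟫_ℝ = w)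
    (h1' : ⟪q, p'⟫_ℝ = w) (h2' : ⟪r, p'⟫_ℝ = w) : p = p' := by
  by_contra hne
  have hd : p - p' ≠ 0 := sub_ne_zero.mpr hne
  have hq0 : q ≠ 0 := by
    intro h; rw [h, inner_zero_left] at h1; exact hw h1.symm
  have esub : ∀ i, (p - p') i = p i - p' i := fun _ => rfl
  have hqd : ⟪q, p - p'⟫_ℝ = 0 := by
    rw [inner2, esub 0, esub 1]; rw [inner2] at h1 h1'; linear_combination h1 - h1'
  have hrd : ⟪r, p - p'⟫_ℝ = 0 := by
    rw [inner2, esub 0, esub 1]; rw [inner2] at h2 h2'; linear_combination h2 - h2'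
  obtain ⟨μ, hμ⟩ := exists_smul_of_cross q r hq0 (cross_eq (p - p') q r hd hqd hrd)
  have : w = μ * w := by
    rw [hμ, real_inner_smul_left, h1] at h2; exact h2.symm
  have hμ1 : μ = 1 := by
    field_simp at this; tauto
  exact hqr (by rw [hμ, hμ1, one_smul])

section Counting

open scoped Classical

inductive WTree : ℕ → Type
  | leaf : WTree 0
  | node {j : ℕ} (a b : ℝ) (t₁ t₂ : WTree j) : WTree (j+1)

def WOk : {j : ℕ} → WTree j → Prop
  | _, .leaf => True
  | _, .node a b t₁ t₂ => a ≠ 0 ∧ b ≠ 0 ∧ WOk t₁ ∧ WOk t₂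

noncomputable def line (E : Finset Pt2) (p : Pt2) (w : ℝ) : Finset Pt2 :=
  E.filter fun q => ⟪q, p⟫_ℝ = w

noncomputable def ecnt (E : Finset Pt2) : {j : ℕ} → WTree j → Pt2 → ℕ
  | _, .leaf, _ => 1
  | _, .node a b t₁ t₂, p =>
      (∑ q ∈ line E p a, ecnt E t₁ q) * (∑ q ∈ line E p b, ecnt E t₂ q)

noncomputable def scnt (E : Finset Pt2) {j : ℕ} (t : WTree j) (w : ℝ) (p : Pt2) : ℕ :=
  ∑ q ∈ line E p w, ecnt E t q

noncomputable def fcnt (E : Finset Pt2) {j : ℕ} (t : WTree j) : ℕ :=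
  ∑ p ∈ E, ecnt E t p

noncomputable def Qcnt (E : Finset Pt2) {j : ℕ} (t : WTree j) (w : ℝ) : ℕ :=
  ∑ p ∈ E, (scnt E t w p)^2

lemma iteMulZero {A B : Prop} [Decidable A] [Decidable B] (x y : ℕ) :
    (if A then x else 0) * (if B then y else 0) = if A ∧ B then x * y else 0 := by
  by_cases hA : A <;> by_cases hB : B <;> simp [hA, hB]

lemma ecnt_node (E : Finset Pt2) {j : ℕ} (a b : ℝ) (t₁ t₂ : WTree j) (p : Pt2) :
    ecnt E (.node a b t₁ t₂) p = scnt E t₁ a p * scnt E t₂ b p := rfl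

lemma scnt_le_fcnt (E : Finset Pt2) {j : ℕ} (t : WTree j) (w : ℝ) (p : Pt2) :
    scnt E t w p ≤ fcnt E t :=
  Finset.sum_le_sum_of_subset (Finset.filter_subset _ _)

lemma line_card_le (E : Finset Pt2) (p : Pt2) (w : ℝ) : (line E p w).card ≤ E.card :=
  Finset.card_le_card (Finset.filter_subset _ _)

/-- Key incidence lemma: `∑_p ℓ(p,w)² ≤ 2n²`. -/
lemma sum_line_sq_le (E : Finset Pt2) {w : ℝ} (hw : w ≠ 0) :
    ∑ p ∈ E, (line E p w).card ^ 2 ≤ 2 * E.card ^ 2 := by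
  calc ∑ p ∈ E, (line E p w).card ^ 2
      = ∑ p ∈ E, ∑ q ∈ E, ∑ r ∈ E,
          (if ⟪q, p⟫_ℝ = w ∧ ⟪r, p⟫_ℝ = w then 1 else 0) := by
        refine Finset.sum_congr rfl fun p _ => ?_
        rw [line, Finset.card_filter, sq, Finset.sum_mul_sum]
        refine Finset.sum_congr rfl fun q _ => Finset.sum_congr rfl fun r _ => ?_
        rw [iteMulZero, mul_one]
    _ = ∑ q ∈ E, ∑ r ∈ E, ∑ p ∈ E,
          (if ⟪q, p⟫_ℝ = w ∧ ⟪r, p⟫_ℝ = w then 1 else 0) := by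
        rw [Finset.sum_comm]
        exact Finset.sum_congr rfl fun q _ => Finset.sum_comm
    _ ≤ ∑ q ∈ E, ∑ r ∈ E, (if q = r then E.card else 1) := by
        refine Finset.sum_le_sum fun q hq => Finset.sum_le_sum fun r hr => ?_
        have hrc : (∑ p ∈ E, (if ⟪q, p⟫_ℝ = w ∧ ⟪r, p⟫_ℝ = w then 1 else 0))
            = (E.filter fun p => ⟪q, p⟫_ℝ = w ∧ ⟪r, p⟫_ℝ = w).card := by
          rw [Finset.card_filter]
        rw [hrc]
        by_cases hqr : q = r
        · simp only [hqr, if_true]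
          exact Finset.card_le_card (Finset.filter_subset _ _)
        · simp only [hqr, if_false]
          refine Finset.card_le_one.mpr fun p hp p' hp' => ?_
          simp only [Finset.mem_filter] at hp hp'
          exact p_unique hw hqr hp.2.1 hp.2.2 hp'.2.1 hp'.2.2
    _ ≤ ∑ q ∈ E, (E.card + E.card) := by
        refine Finset.sum_le_sum fun q hq => ?_
        have h1 : ∀ r ∈ E, (if q = r then E.card else 1) ≤ 1 + (if q = r then E.card else 0) := by
          intro r _; split <;> omega
        calc ∑ r ∈ E, (if q = r then E.card else 1)
            ≤ ∑ r ∈ E, (1 + (if q = r then E.card else 0)) := Finset.sum_le_sum h1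
          _ = E.card + ∑ r ∈ E, (if q = r then E.card else 0) := by
              rw [Finset.sum_add_distrib, Finset.sum_const, smul_eq_mul, mul_one]
          _ ≤ E.card + E.card := by
              gcongr
              rw [Finset.sum_ite_eq E q (fun _ => E.card)]
              split <;> omega
    _ = 2 * E.card ^ 2 := by rw [Finset.sum_const, smul_eq_mul]; ring

/-- The key structural bound on `scnt` of a node. -/
lemma scnt_node_le (E : Finset Pt2) {j : ℕ} (t₁ t₂ : WTree j) (a b w : ℝ) (hw : w ≠ 0)
    (p : Pt2) :
    scnt E (.node a b t₁ t₂) w p ≤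
      fcnt E t₁ * fcnt E t₂ +
        (line E p w).card * (ecnt E t₁ ((a/w) • p) * ecnt E t₂ ((b/w) • p)) := by
  by_cases hp : p = 0
  · have hL : line E p w = ∅ := by
      apply Finset.filter_false_of_mem
      intro q _
      rw [hp, inner_zero_right]
      exact fun h => hw h.symm
    rw [scnt, hL]
    simp
  set s₁ : Pt2 := (a/w) • p with hs₁
  set s₂ : Pt2 := (b/w) • p with hs₂
  set L := line E p w with hL
  have step1 : scnt E (.node a b t₁ t₂) w p
      = ∑ r₁ ∈ E, ∑ r₂ ∈ E, (ecnt E t₁ r₁ * ecnt E t₂ r₂) *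
          (L.filter fun q => ⟪r₁, q⟫_ℝ = a ∧ ⟪r₂, q⟫_ℝ = b).card := by
    rw [scnt]
    have expand : ∀ q : Pt2, ecnt E (.node a b t₁ t₂) q
        = ∑ r₁ ∈ E, ∑ r₂ ∈ E,
            ((if ⟪r₁, q⟫_ℝ = a then ecnt E t₁ r₁ else 0) *
             (if ⟪r₂, q⟫_ℝ = b then ecnt E t₂ r₂ else 0)) := by
      intro q
      rw [ecnt_node, scnt, scnt, line, line, Finset.sum_filter, Finset.sum_filter,
        Finset.sum_mul_sum]
    calc ∑ q ∈ L, ecnt E (.node a b t₁ t₂) q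
        = ∑ q ∈ L, ∑ r₁ ∈ E, ∑ r₂ ∈ E,
            ((if ⟪r₁, q⟫_ℝ = a then ecnt E t₁ r₁ else 0) *
             (if ⟪r₂, q⟫_ℝ = b then ecnt E t₂ r₂ else 0)) :=
          Finset.sum_congr rfl fun q _ => expand q
      _ = ∑ r₁ ∈ E, ∑ r₂ ∈ E, ∑ q ∈ L,
            ((if ⟪r₁, q⟫_ℝ = a then ecnt E t₁ r₁ else 0) *
             (if ⟪r₂, q⟫_ℝ = b then ecnt E t₂ r₂ else 0)) := by
          rw [Finset.sum_comm]
          exact Finset.sum_congr rfl fun _ _ => Finset.sum_comm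
      _ = ∑ r₁ ∈ E, ∑ r₂ ∈ E, (ecnt E t₁ r₁ * ecnt E t₂ r₂) *
            (L.filter fun q => ⟪r₁, q⟫_ℝ = a ∧ ⟪r₂, q⟫_ℝ = b).card := by
          refine Finset.sum_congr rfl fun r₁ _ => Finset.sum_congr rfl fun r₂ _ => ?_
          have e1 : ∀ q : Pt2,
              ((if ⟪r₁, q⟫_ℝ = a then ecnt E t₁ r₁ else 0) *
               (if ⟪r₂, q⟫_ℝ = b then ecnt E t₂ r₂ else 0))
              = (if (⟪r₁, q⟫_ℝ = a ∧ ⟪r₂, q⟫_ℝ = b) then ecnt E t₁ r₁ * ecnt E t₂ r₂ else 0) := by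
            intro q
            rw [iteMulZero]
          rw [Finset.sum_congr rfl fun q _ => e1 q, ← Finset.sum_filter,
            Finset.sum_const, smul_eq_mul, mul_comm]
  rw [step1]
  have step2 : ∀ r₁ ∈ E, ∀ r₂ ∈ E, (ecnt E t₁ r₁ * ecnt E t₂ r₂) *
        (L.filter fun q => ⟪r₁, q⟫_ℝ = a ∧ ⟪r₂, q⟫_ℝ = b).card
      ≤ ecnt E t₁ r₁ * ecnt E t₂ r₂ +
        (if r₁ = s₁ then (if r₂ = s₂ then L.card * (ecnt E t₁ r₁ * ecnt E t₂ r₂) else 0) else 0) := by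
    intro r₁ _ r₂ _
    by_cases hsp : r₁ = s₁ ∧ r₂ = s₂
    · obtain ⟨he1, he2⟩ := hsp
      subst he1; subst he2
      have hcf : (L.filter fun q => ⟪s₁, q⟫_ℝ = a ∧ ⟪s₂, q⟫_ℝ = b).card ≤ L.card :=
        Finset.card_le_card (Finset.filter_subset _ _)
      rw [if_pos rfl, if_pos rfl]
      calc (ecnt E t₁ s₁ * ecnt E t₂ s₂) * (L.filter fun q => ⟪s₁, q⟫_ℝ = a ∧ ⟪s₂, q⟫_ℝ = b).card
          ≤ (ecnt E t₁ s₁ * ecnt E t₂ s₂) * L.card := Nat.mul_le_mul_left _ hcf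
        _ ≤ _ := by rw [mul_comm]; omega
    · have hone : (L.filter fun q => ⟪r₁, q⟫_ℝ = a ∧ ⟪r₂, q⟫_ℝ = b).card ≤ 1 := by
        refine Finset.card_le_one.mpr fun q hq q' hq' => ?_
        simp only [Finset.mem_filter, hL, line] at hq hq'
        exact solve_unique hw hp hsp hq.1.2 hq.2.1 hq.2.2 hq'.1.2 hq'.2.1 hq'.2.2
      calc (ecnt E t₁ r₁ * ecnt E t₂ r₂) *
            (L.filter fun q => ⟪r₁, q⟫_ℝ = a ∧ ⟪r₂, q⟫_ℝ = b).card
          ≤ (ecnt E t₁ r₁ * ecnt E t₂ r₂) * 1 := Nat.mul_le_mul_left _ hone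
        _ ≤ _ := by omega
  calc ∑ r₁ ∈ E, ∑ r₂ ∈ E, (ecnt E t₁ r₁ * ecnt E t₂ r₂) *
          (L.filter fun q => ⟪r₁, q⟫_ℝ = a ∧ ⟪r₂, q⟫_ℝ = b).card
      ≤ ∑ r₁ ∈ E, ∑ r₂ ∈ E, (ecnt E t₁ r₁ * ecnt E t₂ r₂ +
          (if r₁ = s₁ then (if r₂ = s₂ then L.card * (ecnt E t₁ r₁ * ecnt E t₂ r₂) else 0) else 0)) :=
        Finset.sum_le_sum fun r₁ h₁ => Finset.sum_le_sum fun r₂ h₂ => step2 r₁ h₁ r₂ h₂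
    _ = (∑ r₁ ∈ E, ∑ r₂ ∈ E, ecnt E t₁ r₁ * ecnt E t₂ r₂) +
        ∑ r₁ ∈ E, ∑ r₂ ∈ E,
          (if r₁ = s₁ then (if r₂ = s₂ then L.card * (ecnt E t₁ r₁ * ecnt E t₂ r₂) else 0) else 0) := by
        rw [← Finset.sum_add_distrib]
        exact Finset.sum_congr rfl fun r₁ _ => Finset.sum_add_distrib
    _ ≤ fcnt E t₁ * fcnt E t₂ + L.card * (ecnt E t₁ s₁ * ecnt E t₂ s₂) := by
        gcongr
        · rw [fcnt, fcnt, Finset.sum_mul_sum]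
        · have inner_le : ∀ r₁ ∈ E,
              (∑ r₂ ∈ E, (if r₁ = s₁ then (if r₂ = s₂ then L.card * (ecnt E t₁ r₁ * ecnt E t₂ r₂) else 0) else 0))
              ≤ (if r₁ = s₁ then L.card * (ecnt E t₁ r₁ * ecnt E t₂ s₂) else 0) := by
            intro r₁ _
            by_cases h1 : r₁ = s₁
            · simp only [h1, if_true]
              rw [Finset.sum_ite_eq' E s₂ (fun r₂ => L.card * (ecnt E t₁ s₁ * ecnt E t₂ r₂))]
              split <;> omega
            · simp [h1]
          calc ∑ r₁ ∈ E, ∑ r₂ ∈ E,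
                (if r₁ = s₁ then (if r₂ = s₂ then L.card * (ecnt E t₁ r₁ * ecnt E t₂ r₂) else 0) else 0)
              ≤ ∑ r₁ ∈ E, (if r₁ = s₁ then L.card * (ecnt E t₁ r₁ * ecnt E t₂ s₂) else 0) :=
                Finset.sum_le_sum inner_le
            _ ≤ L.card * (ecnt E t₁ s₁ * ecnt E t₂ s₂) := by
                rw [Finset.sum_ite_eq' E s₁ (fun r₁ => L.card * (ecnt E t₁ r₁ * ecnt E t₂ s₂))]
                split <;> omega

end Counting

section Master
open scoped Classical

lemma fcnt_empty {j : ℕ} (t : WTree j) : fcnt ∅ t = 0 := by simp [fcnt]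

lemma Qcnt_empty {j : ℕ} (t : WTree j) (w : ℝ) : Qcnt ∅ t w = 0 := by simp [Qcnt]

lemma nat_add_sq_le (x y : ℕ) : (x + y)^2 ≤ 2*x^2 + 2*y^2 := by
  zify
  nlinarith [sq_nonneg ((x : ℤ) - y)]

lemma Qcnt_node_le (E : Finset Pt2) {j : ℕ} (t₁ t₂ : WTree j) (a b w : ℝ) (hw : w ≠ 0)
    (Db : ℕ) (hDb : ∀ p : Pt2, ecnt E t₁ ((a/w) • p) * ecnt E t₂ ((b/w) • p) ≤ Db) :
    Qcnt E (.node a b t₁ t₂) w ≤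
      2 * (fcnt E t₁ * fcnt E t₂)^2 * E.card + 4 * Db^2 * E.card^2 := by
  set F := fcnt E t₁ * fcnt E t₂ with hF
  have hper : ∀ p ∈ E, (scnt E (.node a b t₁ t₂) w p)^2
      ≤ 2*F^2 + 2*Db^2*(line E p w).card^2 := by
    intro p _
    have h1 : scnt E (.node a b t₁ t₂) w p ≤ F + (line E p w).card * Db := by
      refine (scnt_node_le E t₁ t₂ a b w hw p).trans ?_
      exact Nat.add_le_add_left (Nat.mul_le_mul_left _ (hDb p)) F
    calc (scnt E (.node a b t₁ t₂) w p)^2 ≤ (F + (line E p w).card * Db)^2 :=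
          Nat.pow_le_pow_left h1 2
      _ ≤ 2*F^2 + 2*((line E p w).card * Db)^2 := nat_add_sq_le _ _
      _ = 2*F^2 + 2*Db^2*(line E p w).card^2 := by ring
  calc Qcnt E (.node a b t₁ t₂) w
      ≤ ∑ p ∈ E, (2*F^2 + 2*Db^2*(line E p w).card^2) := Finset.sum_le_sum hper
    _ = 2*F^2 * E.card + 2*Db^2 * ∑ p ∈ E, (line E p w).card^2 := by
        rw [Finset.sum_add_distrib, Finset.sum_const, smul_eq_mul, mul_comm (E.card),
          ← Finset.mul_sum]
    _ ≤ 2*F^2 * E.card + 2*Db^2 * (2 * E.card^2) := by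
        gcongr
        exact sum_line_sq_le E hw
    _ = 2 * F^2 * E.card + 4 * Db^2 * E.card^2 := by ring

lemma fcnt_node_sq_le (E : Finset Pt2) {j : ℕ} (a b : ℝ) (t₁ t₂ : WTree j) :
    (fcnt E (.node a b t₁ t₂))^2 ≤ Qcnt E t₁ a * Qcnt E t₂ b := by
  have h1 : fcnt E (.node a b t₁ t₂) = ∑ p ∈ E, scnt E t₁ a p * scnt E t₂ b p := by
    rw [fcnt]
    exact Finset.sum_congr rfl fun p _ => ecnt_node E a b t₁ t₂ p
  rw [h1, Qcnt, Qcnt]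
  exact Finset.sum_mul_sq_le_sq_mul_sq E (fun p => scnt E t₁ a p) (fun p => scnt E t₂ b p)

lemma master : ∀ j : ℕ, ∃ A : ℕ, 0 < A ∧ ∀ (E : Finset Pt2), ∀ t : WTree j, WOk t →
    fcnt E t ≤ A * E.card ^ Gexp j ∧
    ∀ w : ℝ, w ≠ 0 → Qcnt E t w ≤ A * E.card ^ Gexp (j+1) := by
  intro j
  induction j using Nat.strong_induction_on with
  | _ j IH =>
  obtain _ | _ | j := j
  · -- j = 0
    refine ⟨2, by omega, fun E t _ => ?_⟩
    cases t
    constructor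
    · have : fcnt E .leaf = E.card := by simp [fcnt, ecnt]
      rw [this]
      have : E.card ^ Gexp 0 = E.card := by norm_num [Gexp]
      omega
    · intro w hw
      have hs : ∀ p : Pt2, scnt E .leaf w p = (line E p w).card := by
        intro p; simp [scnt, ecnt]
      have : Qcnt E .leaf w = ∑ p ∈ E, (line E p w).card^2 := by
        rw [Qcnt]; exact Finset.sum_congr rfl fun p _ => by rw [hs]
      rw [this]
      refine (sum_line_sq_le E hw).trans ?_
      have : Gexp 1 = 2 := rfl
      rw [this]
  · -- j = 1
    refine ⟨6, by omega, fun E t hok => ?_⟩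
    rcases Nat.eq_zero_or_pos E.card with h0 | hn
    · rw [Finset.card_eq_zero.mp h0]
      exact ⟨by rw [fcnt_empty]; exact Nat.zero_le _,
        fun w hw => by rw [Qcnt_empty]; exact Nat.zero_le _⟩
    cases t with
    | node a b t₁ t₂ =>
    cases t₁; cases t₂
    obtain ⟨ha, hb, -, -⟩ := hok
    have hQleaf : ∀ w : ℝ, w ≠ 0 → Qcnt E (.leaf) w ≤ 2 * E.card^2 := by
      intro w hw
      have hs : ∀ p : Pt2, scnt E .leaf w p = (line E p w).card := by
        intro p; simp [scnt, ecnt]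
      have : Qcnt E .leaf w = ∑ p ∈ E, (line E p w).card^2 := by
        rw [Qcnt]; exact Finset.sum_congr rfl fun p _ => by rw [hs]
      rw [this]; exact sum_line_sq_le E hw
    have hf : fcnt E (.node a b .leaf .leaf) ≤ 2 * E.card ^ 2 := by
      have h2 : (fcnt E (.node a b .leaf .leaf))^2 ≤ (2 * E.card^2)^2 := by
        refine (fcnt_node_sq_le E a b _ _).trans ?_
        calc Qcnt E .leaf a * Qcnt E .leaf b ≤ (2*E.card^2) * (2*E.card^2) :=
              Nat.mul_le_mul (hQleaf a ha) (hQleaf b hb)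
          _ = (2 * E.card^2)^2 := by ring
      exact (Nat.pow_le_pow_iff_left (by omega)).mp h2
    constructor
    · refine hf.trans ?_
      have hg : Gexp 1 = 2 := rfl
      rw [hg]
      omega
    · intro w hw
      have hDb : ∀ p : Pt2, ecnt E (.leaf) ((a/w) • p) * ecnt E (.leaf) ((b/w) • p) ≤ 1 := by
        intro p; simp [ecnt]
      refine (Qcnt_node_le E .leaf .leaf a b w hw 1 hDb).trans ?_
      have hfl : fcnt E (.leaf : WTree 0) = E.card := by simp [fcnt, ecnt]
      rw [hfl]
      have hg2 : Gexp 2 = 5 := rfl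
      rw [hg2]
      have h25 : E.card^2 ≤ E.card^5 := Nat.pow_le_pow_right hn (by omega)
      calc 2 * (E.card * E.card)^2 * E.card + 4 * 1^2 * E.card^2
          = 2 * E.card^5 + 4 * E.card^2 := by ring
        _ ≤ 2 * E.card^5 + 4 * E.card^5 := by omega
        _ = 6 * E.card^5 := by ring
  · -- j + 2
    obtain ⟨A₁, hA₁, IH1⟩ := IH (j+1) (by omega)
    obtain ⟨A₂, hA₂, IH2⟩ := IH j (by omega)
    refine ⟨A₁ + 2*A₁^4 + 4*A₂^8, by positivity, fun E t hok => ?_⟩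
    rcases Nat.eq_zero_or_pos E.card with h0 | hn
    · rw [Finset.card_eq_zero.mp h0]
      exact ⟨by rw [fcnt_empty]; exact Nat.zero_le _,
        fun w hw => by rw [Qcnt_empty]; exact Nat.zero_le _⟩
    cases t with
    | node a b t₁ t₂ =>
    obtain ⟨ha, hb, hok₁, hok₂⟩ := hok
    set n := E.card with hnn
    set A : ℕ := A₁ + 2*A₁^4 + 4*A₂^8 with hA
    have hf : fcnt E (.node a b t₁ t₂) ≤ A₁ * n ^ Gexp (j+2) := by
      have h2 : (fcnt E (.node a b t₁ t₂))^2 ≤ (A₁ * n ^ Gexp (j+2))^2 := by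
        refine (fcnt_node_sq_le E a b t₁ t₂).trans ?_
        calc Qcnt E t₁ a * Qcnt E t₂ b
            ≤ (A₁ * n ^ Gexp (j+2)) * (A₁ * n ^ Gexp (j+2)) :=
              Nat.mul_le_mul ((IH1 E t₁ hok₁).2 a ha) ((IH1 E t₂ hok₂).2 b hb)
          _ = (A₁ * n ^ Gexp (j+2))^2 := by ring
      exact (Nat.pow_le_pow_iff_left (by omega)).mp h2
    constructor
    · refine hf.trans ?_
      have : A₁ ≤ A := by rw [hA]; omega
      exact Nat.mul_le_mul_right _ this
    · intro w hw
      cases t₁ with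
      | node a₁ b₁ u₁ u₂ =>
      cases t₂ with
      | node a₂ b₂ u₃ u₄ =>
      obtain ⟨ha₁, hb₁, hoku₁, hoku₂⟩ := hok₁
      obtain ⟨ha₂, hb₂, hoku₃, hoku₄⟩ := hok₂
      set Db : ℕ := (A₂ * n ^ Gexp j)^4 with hDbdef
      have hDb : ∀ p : Pt2,
          ecnt E (.node a₁ b₁ u₁ u₂) ((a/w) • p) * ecnt E (.node a₂ b₂ u₃ u₄) ((b/w) • p) ≤ Db := by
        intro p
        rw [ecnt_node, ecnt_node, hDbdef]
        have l1 := (scnt_le_fcnt E u₁ a₁ ((a/w) • p)).trans (IH2 E u₁ hoku₁).1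
        have l2 := (scnt_le_fcnt E u₂ b₁ ((a/w) • p)).trans (IH2 E u₂ hoku₂).1
        have l3 := (scnt_le_fcnt E u₃ a₂ ((b/w) • p)).trans (IH2 E u₃ hoku₃).1
        have l4 := (scnt_le_fcnt E u₄ b₂ ((b/w) • p)).trans (IH2 E u₄ hoku₄).1
        calc _ ≤ ((A₂ * n ^ Gexp j) * (A₂ * n ^ Gexp j)) * ((A₂ * n ^ Gexp j) * (A₂ * n ^ Gexp j)) :=
              Nat.mul_le_mul (Nat.mul_le_mul l1 l2) (Nat.mul_le_mul l3 l4)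
          _ = (A₂ * n ^ Gexp j)^4 := by ring
      refine (Qcnt_node_le E _ _ a b w hw Db hDb).trans ?_
      have hf₁ := (IH1 E (.node a₁ b₁ u₁ u₂) ⟨ha₁, hb₁, hoku₁, hoku₂⟩).1
      have hf₂ := (IH1 E (.node a₂ b₂ u₃ u₄) ⟨ha₂, hb₂, hoku₃, hoku₄⟩).1
      have term1 : 2 * (fcnt E (.node a₁ b₁ u₁ u₂) * fcnt E (.node a₂ b₂ u₃ u₄))^2 * n
          ≤ 2*A₁^4 * n ^ Gexp (j+3) := by
        calc 2 * (fcnt E (.node a₁ b₁ u₁ u₂) * fcnt E (.node a₂ b₂ u₃ u₄))^2 * n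
            ≤ 2 * ((A₁ * n ^ Gexp (j+1)) * (A₁ * n ^ Gexp (j+1)))^2 * n :=
              Nat.mul_le_mul_right _ (Nat.mul_le_mul_left _
                (Nat.pow_le_pow_left (Nat.mul_le_mul hf₁ hf₂) 2))
          _ = 2*A₁^4 * n ^ (1 + 4 * Gexp (j+1)) := by ring
          _ ≤ 2*A₁^4 * n ^ Gexp (j+3) := by
              have := Gexp_a (j+1)
              exact Nat.mul_le_mul_left _ (Nat.pow_le_pow_right hn this)
      have term2 : 4 * Db^2 * n^2 ≤ 4*A₂^8 * n ^ Gexp (j+3) := by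
        calc 4 * Db^2 * n^2 = 4*A₂^8 * n ^ (2 + 8 * Gexp j) := by rw [hDbdef]; ring
          _ ≤ 4*A₂^8 * n ^ Gexp (j+3) := by
              have := Gexp_b j
              exact Nat.mul_le_mul_left _ (Nat.pow_le_pow_right hn this)
      calc 2 * (fcnt E (.node a₁ b₁ u₁ u₂) * fcnt E (.node a₂ b₂ u₃ u₄))^2 * n + 4 * Db^2 * n^2
          ≤ 2*A₁^4 * n ^ Gexp (j+3) + 4*A₂^8 * n ^ Gexp (j+3) := Nat.add_le_add term1 term2
        _ = (2*A₁^4 + 4*A₂^8) * n ^ Gexp (j+3) := by ring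
        _ ≤ A * n ^ Gexp (j+3) := Nat.mul_le_mul_right _ (by rw [hA]; omega)

end Master

section Build
open scoped Classical

def build (W : List (Fin 2) → List (Fin 2) → ℝ) : (j : ℕ) → List (Fin 2) → WTree j
  | 0, _ => .leaf
  | j+1, l => .node (W (0::l) l) (W (1::l) l) (build W j (0::l)) (build W j (1::l))

lemma WOk_build (W : List (Fin 2) → List (Fin 2) → ℝ) (h : ℕ)
    (hW : ∀ (i : Fin 2) (l : List (Fin 2)), l.length + 1 ≤ h → W (i::l) l ≠ 0) :
    ∀ (j : ℕ) (l : List (Fin 2)), l.length + j ≤ h → WOk (build W j l) := by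
  intro j
  induction j with
  | zero => intro l _; trivial
  | succ j ih =>
    intro l hl
    refine ⟨hW 0 l (by omega), hW 1 l (by omega), ih (0::l) ?_, ih (1::l) ?_⟩ <;>
      simp only [List.length_cons] <;> omega

noncomputable def Cand (E : Finset Pt2) (W : List (Fin 2) → List (Fin 2) → ℝ) :
    (j : ℕ) → List (Fin 2) → Pt2 → Finset (List (Fin 2) → Pt2)
  | 0, l, p => {fun m => if m = l then p else 0}
  | j+1, l, p =>
    (line E p (W (0::l) l)).biUnion fun q₀ =>
      (line E p (W (1::l) l)).biUnion fun q₁ =>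
        (Cand E W j (0::l) q₀).biUnion fun φ₀ =>
          (Cand E W j (1::l) q₁).image fun φ₁ => fun m =>
            if m = l then p
            else if (0::l) <:+ m then φ₀ m
            else if (1::l) <:+ m then φ₁ m else 0

lemma Cand_card (E : Finset Pt2) (W : List (Fin 2) → List (Fin 2) → ℝ) :
    ∀ (j : ℕ) (l : List (Fin 2)) (p : Pt2),
      (Cand E W j l p).card ≤ ecnt E (build W j l) p := by
  intro j
  induction j with
  | zero => intro l p; simp [Cand, build, ecnt]
  | succ j ih =>
    intro l p
    have hstep : (Cand E W (j+1) l p).card ≤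
        ∑ q₀ ∈ line E p (W (0::l) l), ∑ q₁ ∈ line E p (W (1::l) l),
          (Cand E W j (0::l) q₀).card * (Cand E W j (1::l) q₁).card := by
      rw [Cand]
      refine (Finset.card_biUnion_le).trans (Finset.sum_le_sum fun q₀ _ => ?_)
      refine (Finset.card_biUnion_le).trans (Finset.sum_le_sum fun q₁ _ => ?_)
      refine (Finset.card_biUnion_le).trans ?_
      calc ∑ φ₀ ∈ Cand E W j (0::l) q₀, ((Cand E W j (1::l) q₁).image _).card
          ≤ ∑ _φ₀ ∈ Cand E W j (0::l) q₀, (Cand E W j (1::l) q₁).card :=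
            Finset.sum_le_sum fun _ _ => Finset.card_image_le
        _ = (Cand E W j (0::l) q₀).card * (Cand E W j (1::l) q₁).card := by
            rw [Finset.sum_const, smul_eq_mul]
    refine hstep.trans ?_
    have : ecnt E (build W (j+1) l) p =
        (∑ q₀ ∈ line E p (W (0::l) l), ecnt E (build W j (0::l)) q₀) *
        (∑ q₁ ∈ line E p (W (1::l) l), ecnt E (build W j (1::l)) q₁) := rfl
    rw [this, Finset.sum_mul_sum]
    exact Finset.sum_le_sum fun q₀ _ => Finset.sum_le_sum fun q₁ _ =>
      Nat.mul_le_mul (ih (0::l) q₀) (ih (1::l) q₁)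

lemma mem_Cand (E : Finset Pt2) (W : List (Fin 2) → List (Fin 2) → ℝ) (h : ℕ)
    (ψ : List (Fin 2) → Pt2)
    (hmem : ∀ m : List (Fin 2), m.length ≤ h → ψ m ∈ E)
    (hedge : ∀ (i : Fin 2) (m : List (Fin 2)), m.length + 1 ≤ h →
      ⟪ψ (i::m), ψ m⟫_ℝ = W (i::m) m) :
    ∀ (j : ℕ) (l : List (Fin 2)), l.length + j = h →
      (fun m => if l <:+ m ∧ m.length ≤ h then ψ m else 0) ∈ Cand E W j l (ψ l) := by
  intro j
  induction j with
  | zero =>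
    intro l hl
    rw [Cand, Finset.mem_singleton]
    funext m
    by_cases hm : m = l
    · subst hm
      rw [if_pos rfl, if_pos ⟨List.suffix_refl m, by omega⟩]
    · rw [if_neg hm]
      by_cases hc : l <:+ m ∧ m.length ≤ h
      · exfalso
        apply hm
        exact (hc.1.eq_of_length (le_antisymm hc.1.length_le (by omega))).symm
      · rw [if_neg hc]
  | succ j ih =>
    intro l hl
    have hll : l.length ≤ h := by omega
    have h0l : (0::l : List (Fin 2)).length + j = h := by simp; omega
    have h1l : (1::l : List (Fin 2)).length + j = h := by simp; omega
    rw [Cand]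
    refine Finset.mem_biUnion.mpr ⟨ψ (0::l), ?_, ?_⟩
    · exact Finset.mem_filter.mpr ⟨hmem _ (by simp; omega), hedge 0 l (by omega)⟩
    refine Finset.mem_biUnion.mpr ⟨ψ (1::l), ?_, ?_⟩
    · exact Finset.mem_filter.mpr ⟨hmem _ (by simp; omega), hedge 1 l (by omega)⟩
    refine Finset.mem_biUnion.mpr ⟨_, ih (0::l) h0l, ?_⟩
    refine Finset.mem_image.mpr ⟨_, ih (1::l) h1l, ?_⟩
    funext m
    by_cases hm : m = l
    · subst hm
      rw [if_pos rfl, if_pos ⟨List.suffix_refl m, hll⟩]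
    rw [if_neg hm]
    by_cases h0 : (0::l) <:+ m
    · rw [if_pos h0]
      have hlm : l <:+ m := (List.suffix_cons 0 l).trans h0
      by_cases hlen : m.length ≤ h
      · rw [if_pos ⟨h0, hlen⟩, if_pos ⟨hlm, hlen⟩]
      · rw [if_neg (fun hc => hlen hc.2), if_neg (fun hc => hlen hc.2)]
    rw [if_neg h0]
    by_cases h1 : (1::l) <:+ m
    · rw [if_pos h1]
      have hlm : l <:+ m := (List.suffix_cons 1 l).trans h1
      by_cases hlen : m.length ≤ h
      · rw [if_pos ⟨h1, hlen⟩, if_pos ⟨hlm, hlen⟩]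
      · rw [if_neg (fun hc => hlen hc.2), if_neg (fun hc => hlen hc.2)]
    rw [if_neg h1]
    by_cases hc : l <:+ m ∧ m.length ≤ h
    · exfalso
      obtain ⟨t, ht⟩ := hc.1
      rcases List.eq_nil_or_concat t with rfl | ⟨t', i, rfl⟩
      · exact hm (by simpa using ht.symm)
      · have : (i :: l) <:+ m := ⟨t', by rw [← ht]; simp⟩
        fin_cases i
        · exact h0 this
        · exact h1 this
    · rw [if_neg hc]

end Build

/-- **dot product configurations on perfect binary trees, in the plane.**
Fix `h ≥ 1` and any assignment of nonzero weights to the edges of the perfect binary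
tree `T_{2,h}`.  If `h` is odd then `g(T_{2,h}; n) ≲ n^((2/3)(2^(h+1) − 1))`, and if `h`
is even then `g(T_{2,h}; n) ≲ n^(1 + (4/3)(2^h − 1))`. -/
theorem dotProduct_binaryTree_upper_bounds (h : ℕ) (hh : 1 ≤ h)
    (w : TreeVert 2 h → TreeVert 2 h → ℝ)
    (hsym : ∀ u v, w u v = w v u)
    (hne : ∀ u v, treeAdj 2 h u v → w u v ≠ 0) :
    (Odd h →
      ∃ C : ℝ, 0 < C ∧ ∃ N : ℕ, ∀ n : ℕ, N < n → ∀ E : Finset Pt2, E.card = n →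
        ((dpTreeConfigs 2 h w E).ncard : ℝ) ≤
          C * (n : ℝ) ^ ((2 : ℝ) / 3 * (2 ^ (h + 1) - 1))) ∧
    (Even h →
      ∃ C : ℝ, 0 < C ∧ ∃ N : ℕ, ∀ n : ℕ, N < n → ∀ E : Finset Pt2, E.card = n →
        ((dpTreeConfigs 2 h w E).ncard : ℝ) ≤
          C * (n : ℝ) ^ (1 + (4 : ℝ) / 3 * (2 ^ h - 1))) := by
  classical
  set W : List (Fin 2) → List (Fin 2) → ℝ := fun a b =>
    if hab : a.length ≤ h ∧ b.length ≤ h then w ⟨a, hab.1⟩ ⟨b, hab.2⟩ else 1 with hWdef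
  obtain ⟨A, hA, hmaster⟩ := master h
  have hok : WOk (build W h []) := by
    refine WOk_build W h ?_ h [] (by simp)
    intro i l hlen
    rw [hWdef]
    dsimp only
    rw [dif_pos ⟨by simpa using hlen, by omega⟩]
    exact hne ⟨i::l, by simpa using hlen⟩ ⟨l, by omega⟩ (Or.inl ⟨i, rfl⟩)
  have key : ∀ E : Finset Pt2, (dpTreeConfigs 2 h w E).ncard ≤ A * E.card ^ Gexp h := by
    intro E
    set Ψ : (TreeVert 2 h → Pt2) → (List (Fin 2) → Pt2) :=
      fun φ m => if hm : m.length ≤ h then φ ⟨m, hm⟩ else 0 with hΨ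
    set B := E.biUnion (fun p => Cand E W h [] p) with hB
    have hmap : ∀ φ ∈ dpTreeConfigs 2 h w E, Ψ φ ∈ (B : Set (List (Fin 2) → Pt2)) := by
      intro φ hφ
      obtain ⟨hφE, hφinj, hφedge⟩ := hφ
      have hmem : ∀ m : List (Fin 2), m.length ≤ h → Ψ φ m ∈ E := by
        intro m hm
        simp only [hΨ]
        rw [dif_pos hm]
        exact hφE _
      have hedge : ∀ (i : Fin 2) (m : List (Fin 2)), m.length + 1 ≤ h →
          ⟪Ψ φ (i::m), Ψ φ m⟫_ℝ = W (i::m) m := by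
        intro i m hm
        have h1 : (i::m : List (Fin 2)).length ≤ h := by simpa using hm
        have h2 : m.length ≤ h := by omega
        simp only [hΨ]
        rw [dif_pos h1, dif_pos h2, hWdef]
        dsimp only
        rw [dif_pos ⟨h1, h2⟩]
        exact hφedge ⟨i::m, h1⟩ ⟨m, h2⟩ (Or.inl ⟨i, rfl⟩)
      have hrestr : (fun m => if [] <:+ m ∧ m.length ≤ h then Ψ φ m else 0) = Ψ φ := by
        funext m
        simp only [List.nil_suffix, true_and]
        by_cases hm : m.length ≤ h
        · rw [if_pos hm]
        · rw [if_neg hm]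
          simp only [hΨ]
          rw [dif_neg hm]
      refine Finset.mem_coe.mpr (Finset.mem_biUnion.mpr ⟨Ψ φ [], hmem [] (by simp), ?_⟩)
      have := mem_Cand E W h (Ψ φ) hmem hedge h [] (by simp)
      rwa [hrestr] at this
    have hinj : Set.InjOn Ψ (dpTreeConfigs 2 h w E) := by
      intro φ1 _ φ2 _ heq
      funext v
      have hv := congrFun heq v.1
      simp only [hΨ] at hv
      rw [dif_pos v.2, dif_pos v.2] at hv
      exact hv
    calc (dpTreeConfigs 2 h w E).ncard
        ≤ (B : Set (List (Fin 2) → Pt2)).ncard :=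
          Set.ncard_le_ncard_of_injOn Ψ hmap hinj B.finite_toSet
      _ = B.card := Set.ncard_coe_finset B
      _ ≤ ∑ p ∈ E, (Cand E W h [] p).card := Finset.card_biUnion_le
      _ ≤ ∑ p ∈ E, ecnt E (build W h []) p :=
          Finset.sum_le_sum fun p _ => Cand_card E W h [] p
      _ = fcnt E (build W h []) := rfl
      _ ≤ A * E.card ^ Gexp h := (hmaster E _ hok).1
  have main : ∀ (n : ℕ) (E : Finset Pt2), E.card = n →
      ((dpTreeConfigs 2 h w E).ncard : ℝ) ≤ ((A:ℝ)+1) * (n:ℝ) ^ (Gexp h) := by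
    intro n E hE
    have h1 := key E
    rw [hE] at h1
    calc ((dpTreeConfigs 2 h w E).ncard : ℝ) ≤ ((A * n ^ Gexp h : ℕ) : ℝ) := by exact_mod_cast h1
      _ = (A:ℝ) * (n:ℝ) ^ (Gexp h) := by push_cast; ring
      _ ≤ ((A:ℝ)+1) * (n:ℝ) ^ (Gexp h) := by
          have : (0:ℝ) ≤ (n:ℝ) ^ (Gexp h) := by positivity
          nlinarith
  constructor
  · intro hodd
    refine ⟨(A:ℝ)+1, by positivity, 0, fun n _ E hE => ?_⟩
    have hmod : h % 2 = 1 := Nat.odd_iff.mp hodd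
    have hc := Gexp_closed h
    rw [hmod] at hc
    have hcr : 3 * ((Gexp h : ℕ) : ℝ) + 2 = (2:ℝ)^(h+2) := by exact_mod_cast hc
    have hexp : (2:ℝ)/3 * ((2:ℝ)^(h+1) - 1) = ((Gexp h : ℕ) : ℝ) := by
      have hp : (2:ℝ)^(h+2) = (2:ℝ)^(h+1) * 2 := pow_succ 2 (h+1)
      linarith
    calc ((dpTreeConfigs 2 h w E).ncard : ℝ)
        ≤ ((A:ℝ)+1) * (n:ℝ) ^ (Gexp h) := main n E hE
      _ = ((A:ℝ)+1) * (n:ℝ) ^ (((Gexp h : ℕ) : ℝ)) := by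
          rw [Real.rpow_natCast]
      _ = ((A:ℝ)+1) * (n:ℝ) ^ ((2:ℝ)/3 * ((2:ℝ)^(h+1) - 1)) := by rw [hexp]
  · intro heven
    refine ⟨(A:ℝ)+1, by positivity, 0, fun n _ E hE => ?_⟩
    have hmod : h % 2 = 0 := Nat.even_iff.mp heven
    have hc := Gexp_closed h
    rw [hmod] at hc
    have hcr : 3 * ((Gexp h : ℕ) : ℝ) + 1 = (2:ℝ)^(h+2) := by exact_mod_cast hc
    have hexp : 1 + (4:ℝ)/3 * ((2:ℝ)^h - 1) = ((Gexp h : ℕ) : ℝ) := by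
      have hp : (2:ℝ)^(h+2) = (2:ℝ)^h * 4 := by rw [pow_add]; norm_num
      linarith
    calc ((dpTreeConfigs 2 h w E).ncard : ℝ)
        ≤ ((A:ℝ)+1) * (n:ℝ) ^ (Gexp h) := main n E hE
      _ = ((A:ℝ)+1) * (n:ℝ) ^ (((Gexp h : ℕ) : ℝ)) := by
          rw [Real.rpow_natCast]
      _ = ((A:ℝ)+1) * (n:ℝ) ^ (1 + (4:ℝ)/3 * ((2:ℝ)^h - 1)) := by rw [hexp]
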